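/- Let C be a category, J a Grothendieck topology on C, and P a class of objects of C such that (a) e ∈ P whenever there exists some morphism e ⟶ d with d ∈ P, and (b) c ∈ P whenever the sieve Z(c) is J-covering (P is a J-ideal). Let U : Cᵒᵖ ⥤ Type be the presheaf with U(c) a one-element set if c ∈ P and U(c) empty otherwise (with the evident restriction maps, well defined by (a)), let C' be the full subcategory of C on the objects in P, and let J' be the Grothendieck topology on C' given by J'(c) = J(c) for c ∈ P (well defined since, by (a), every morphism into an object of P has domain in P, so sieves on c in C' coincide with sieves on c in C). Then U is a J-sheaf, and the slice category of the category of J-sheaves over U is equivalent to the category of J'-sheaves on C': Sh(C, J)/U ≃ Sh(C', J'). -/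

import Mathlib

open CategoryTheory CategoryTheory.Limits Opposite

/-- For a class of objects `P` closed under the existence of morphisms into it, `Z(c)` is the
sieve on `c` of all morphisms whose domain belongs to `P`. -/
def domainSieve {C : Type u} [Category.{v} C] (P : C → Prop)
    (hP : ∀ (e d : C), (e ⟶ d) → P d → P e) (c : C) : Sieve c where
  arrows d _ := P d
  downward_closed := fun hf g => hP _ _ g hf

/-- The subterminal presheaf associated to a class of objects `P` closed under the existence
of morphisms into it: its value at `c` is a one-element set if `c ∈ P` and empty otherwise. -/
def idealPresheaf {C : Type u} [Category.{v} C] (P : C → Prop)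
    (hP : ∀ (e d : C), (e ⟶ d) → P d → P e) : Cᵒᵖ ⥤ Type where
  obj c := PLift (P c.unop)
  map f := TypeCat.ofHom fun x => ⟨hP _ _ f.unop x.down⟩

namespace SliceIdealAux

variable {C : Type u} [Category.{v} C] (P : C → Prop)
  (hP : ∀ (e d : C), (e ⟶ d) → P d → P e)

/-- Extension of a presheaf on the full subcategory to `C`, vanishing outside `P`. -/
def ext (G : (ObjectProperty.FullSubcategory P)ᵒᵖ ⥤ Type) : Cᵒᵖ ⥤ Type where
  obj c := (h : PLift (P c.unop)) × G.obj (op ⟨c.unop, h.down⟩)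
  map {c c'} f := TypeCat.ofHom fun x =>
    ⟨⟨hP _ _ f.unop x.1.down⟩,
      G.map (Quiver.Hom.op
        (show (⟨c'.unop, hP _ _ f.unop x.1.down⟩ : ObjectProperty.FullSubcategory P) ⟶
          ⟨c.unop, x.1.down⟩ from ObjectProperty.homMk f.unop)) x.2⟩
  map_id c := by
    refine ConcreteCategory.hom_ext _ _ fun x => ?_
    exact congrArg (Sigma.mk x.1) (types_congr_hom (G.map_id (op ⟨c.unop, x.1.down⟩)) x.2)
  map_comp {c c' c''} f g := by
    refine ConcreteCategory.hom_ext _ _ fun x => ?_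
    exact congrArg (Sigma.mk _)
      (types_congr_hom (G.map_comp
        (Quiver.Hom.op (show (⟨c'.unop, _⟩ : ObjectProperty.FullSubcategory P) ⟶ ⟨c.unop, x.1.down⟩ from ObjectProperty.homMk f.unop))
        (Quiver.Hom.op (show (⟨c''.unop, _⟩ : ObjectProperty.FullSubcategory P) ⟶ ⟨c'.unop, _⟩ from ObjectProperty.homMk g.unop))) x.2)

/-- Second projection out of the extension, with an arbitrary proof. -/
def snd' {c : C} (hc : P c) (G : (ObjectProperty.FullSubcategory P)ᵒᵖ ⥤ Type) :
    ((h : PLift (P c)) × G.obj (op ⟨c, h.down⟩)) → G.obj (op ⟨c, hc⟩) := fun p => p.2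

variable {P} in
lemma sigma_ext {c : C} (hc : P c) (G : (ObjectProperty.FullSubcategory P)ᵒᵖ ⥤ Type)
    (p q : (h : PLift (P c)) × G.obj (op ⟨c, h.down⟩))
    (h : snd' P hc G p = snd' P hc G q) : p = q := by
  obtain ⟨⟨hp⟩, p2⟩ := p
  obtain ⟨⟨hq⟩, q2⟩ := q
  exact congrArg (Sigma.mk (⟨hp⟩ : PLift (P c))) h

variable {P} in
lemma mem_of_pushforward {X : ObjectProperty.FullSubcategory P} (S : Sieve X) {Y : C} {f : Y ⟶ X.obj}
    (hf : S.functorPushforward (ObjectProperty.ι P) f) (hY : P Y) :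
    S.arrows (show (⟨Y, hY⟩ : ObjectProperty.FullSubcategory P) ⟶ X from ObjectProperty.homMk f) := by
  obtain ⟨Z, g, h, hg, rfl⟩ := hf
  exact S.downward_closed hg (show (⟨Y, hY⟩ : ObjectProperty.FullSubcategory P) ⟶ Z from ObjectProperty.homMk h)

end SliceIdealAux

/-- Let `P` be a `J`-ideal (a class of objects closed under the existence of morphisms into
it, and containing every `c` such that `Z(c)` is `J`-covering), let `U` be the associated
subterminal presheaf, let `C'` be the full subcategory on `P`, and let `J'` be the
Grothendieck topology on `C'` given by `J'(c) = J(c)` (under the identification of sieves in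
`C'` with sieves in `C`). Then `U` is a `J`-sheaf and `Sh(C, J)/U ≃ Sh(C', J')`. -/
theorem slice_of_sheaves_over_ideal_presheaf
    {C : Type u} [Category.{v} C] (J : GrothendieckTopology C) (P : C → Prop)
    (hP : ∀ (e d : C), (e ⟶ d) → P d → P e)
    (hIdeal : ∀ c : C, domainSieve P hP c ∈ J c → P c)
    (J' : GrothendieckTopology (ObjectProperty.FullSubcategory P))
    (hJ' : ∀ (c : ObjectProperty.FullSubcategory P) (S : Sieve c),
      S ∈ J' c ↔ S.functorPushforward (ObjectProperty.ι P) ∈ J c.obj) :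
    ∃ hU : Presheaf.IsSheaf J (idealPresheaf P hP),
      Nonempty
        (Over (⟨idealPresheaf P hP, hU⟩ : Sheaf J (Type 0)) ≌ Sheaf J' (Type 0)) := by
  classical
  open SliceIdealAux in
  -- U is a sheaf
  have hU : Presheaf.IsSheaf J (idealPresheaf P hP) := by
    rw [isSheaf_iff_isSheaf_of_type]
    intro X S hS x hx
    have hPX : P X := hIdeal X (J.superset_covering (fun Y f hf => (PLift.down (x f hf))) hS)
    exact ⟨(⟨hPX⟩ : PLift (P X)), fun Y f hf => @Subsingleton.elim (PLift (P Y)) _ _ _,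
      fun y _ => @Subsingleton.elim (PLift (P X)) _ _ _⟩
  refine ⟨hU, ?_⟩
  set U : Sheaf J (Type 0) := ⟨idealPresheaf P hP, hU⟩ with hUdef
  -- any two maps to U agree
  have toU : ∀ {F : Sheaf J (Type 0)} (a b : F ⟶ U), a = b := by
    intro F a b
    apply Sheaf.hom_ext
    ext c x
    exact @Subsingleton.elim (PLift (P c.unop)) _ _ _
  -- restriction of a J-sheaf is a J'-sheaf
  have restr_sheaf : ∀ (F : Cᵒᵖ ⥤ Type 0), Presheaf.IsSheaf J F →
      Presheaf.IsSheaf J' ((ObjectProperty.ι P).op ⋙ F) := by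
    intro F hF
    rw [isSheaf_iff_isSheaf_of_type] at hF ⊢
    intro X S hS x hx
    have hS' : S.functorPushforward (ObjectProperty.ι P) ∈ J X.obj := (hJ' X S).1 hS
    let y : Presieve.FamilyOfElements F (S.functorPushforward (ObjectProperty.ι P)).arrows :=
      fun Y f (hf : (S.functorPushforward (ObjectProperty.ι P)).arrows f) =>
        x (show (⟨Y, hP Y X.obj f X.property⟩ : ObjectProperty.FullSubcategory P) ⟶ X from ObjectProperty.homMk f)
          (mem_of_pushforward S hf _)
    have hy : y.Compatible := by
      intro Y₁ Y₂ Z g₁ g₂ f₁ f₂ h₁ h₂ hcomm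
      exact hx (show (⟨Z, hP Z Y₁ g₁ (hP Y₁ X.obj f₁ X.property)⟩ : ObjectProperty.FullSubcategory P) ⟶
          ⟨Y₁, _⟩ from ObjectProperty.homMk g₁)
        (show (⟨Z, _⟩ : ObjectProperty.FullSubcategory P) ⟶ ⟨Y₂, hP Y₂ X.obj f₂ X.property⟩ from ObjectProperty.homMk g₂)
        (mem_of_pushforward S h₁ _) (mem_of_pushforward S h₂ _) (ObjectProperty.hom_ext P hcomm)
    obtain ⟨t, ht, htu⟩ := hF _ hS' y hy
    refine ⟨t, ?_, ?_⟩
    · intro Y f hf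
      exact ht f.hom ⟨Y, f, 𝟙 _, hf, by simp⟩
    · intro t' ht'
      exact htu t' (fun Y f hf => ht' _ (mem_of_pushforward S hf (hP Y X.obj f X.property)))
  -- the extension of a J'-sheaf is a J-sheaf
  have ext_sheaf : ∀ (G : Sheaf J' (Type 0)), Presheaf.IsSheaf J (ext P hP G.val) := by
    intro G
    have hG := G.cond
    rw [isSheaf_iff_isSheaf_of_type] at hG ⊢
    intro X S hS x hx
    have hPX : P X := hIdeal X (J.superset_covering (fun Y f hf => (Sigma.fst (x f hf)).down) hS)
    let X' : ObjectProperty.FullSubcategory P := ⟨X, hPX⟩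
    let S' : Sieve X' :=
      { arrows := fun Y' f' => S.arrows f'.hom
        downward_closed := fun hf g => S.downward_closed hf g.hom }
    have hle : S ≤ S'.functorPushforward (ObjectProperty.ι P) := by
      intro Y f hf
      exact ⟨⟨Y, (Sigma.fst (x f hf)).down⟩,
        show (⟨Y, (Sigma.fst (x f hf)).down⟩ : ObjectProperty.FullSubcategory P) ⟶ X' from ObjectProperty.homMk f, 𝟙 Y, hf, by simp⟩
    have hS' : S' ∈ J' X' := (hJ' X' S').2 (J.superset_covering hle hS)
    let x' : Presieve.FamilyOfElements G.val (S' : Presieve X') :=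
      fun Y' f' hf' => show G.val.obj (op Y') from (x f'.hom hf').2
    have hx' : x'.Compatible := by
      intro Y₁ Y₂ Z g₁ g₂ f₁ f₂ h₁ h₂ hcomm
      exact congrArg (snd' P Z.property G.val)
        (hx (show Z.obj ⟶ Y₁.obj from g₁.hom) (show Z.obj ⟶ Y₂.obj from g₂.hom) h₁ h₂ (congrArg (fun k => k.hom) hcomm))
    obtain ⟨t, ht, htu⟩ := hG S' hS' x' hx'
    refine ⟨⟨⟨hPX⟩, t⟩, ?_, ?_⟩
    · intro Y f hf
      exact congrArg (Sigma.mk _)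
        (ht (show (⟨Y, (Sigma.fst (x f hf)).down⟩ : ObjectProperty.FullSubcategory P) ⟶ X' from ObjectProperty.homMk f) hf)
    · intro t'' ht''
      exact congrArg (Sigma.mk t''.1)
        (htu t''.2 (fun Y' f' hf' => congrArg (snd' P Y'.property G.val) (ht'' f'.hom hf')))
  -- the forward functor: restriction
  let Φ : Over U ⥤ Sheaf J' (Type 0) :=
    { obj := fun F => ⟨(ObjectProperty.ι P).op ⋙ F.left.val,
        restr_sheaf _ F.left.cond⟩
      map := fun {F F'} f => ⟨Functor.whiskerLeft (ObjectProperty.ι P).op f.left.hom⟩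
      map_id := fun F => by apply Sheaf.hom_ext; rfl
      map_comp := fun f g => by apply Sheaf.hom_ext; rfl }
  -- the backward functor: extension
  let extval : Sheaf J' (Type 0) → Sheaf J (Type 0) := fun G => ⟨ext P hP G.val, ext_sheaf G⟩
  let πU : ∀ G : Sheaf J' (Type 0), extval G ⟶ U := fun G =>
    ⟨{ app := fun c => TypeCat.ofHom fun x => x.1, naturality := fun c c' f => rfl }⟩
  let Ψ : Sheaf J' (Type 0) ⥤ Over U :=
    { obj := fun G => Over.mk (πU G)
      map := fun {G G'} α => Over.homMk
        ⟨{ app := fun c => TypeCat.ofHom fun x => ⟨x.1, α.hom.app _ x.2⟩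
           naturality := fun c c' f => by
             refine ConcreteCategory.hom_ext _ _ fun x => ?_
             exact congrArg (Sigma.mk _)
               (types_congr_hom (α.hom.naturality (Quiver.Hom.op
                 (show (⟨c'.unop, hP _ _ f.unop x.1.down⟩ : ObjectProperty.FullSubcategory P) ⟶
                   ⟨c.unop, x.1.down⟩ from ObjectProperty.homMk f.unop))) x.2) }⟩
        (toU _ _)
      map_id := fun G => by
        apply Over.OverMorphism.ext; apply Sheaf.hom_ext; ext c x; rfl
      map_comp := fun f g => by
        apply Over.OverMorphism.ext; apply Sheaf.hom_ext; ext c x; rfl }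
  -- unit
  let η : 𝟭 (Over U) ≅ Φ ⋙ Ψ := by
    refine NatIso.ofComponents (fun F => Over.isoMk ?_ (toU _ _)) ?_
    · refine Iso.mk
        ⟨{ app := fun c => TypeCat.ofHom fun x => ⟨F.hom.hom.app c x, x⟩
           naturality := fun c c' f => rfl }⟩
        ⟨{ app := fun c => TypeCat.ofHom fun x => x.2
           naturality := fun c c' f => rfl }⟩ ?_ ?_
      · apply Sheaf.hom_ext; ext c x
        first
        | rfl
        | (obtain ⟨⟨h⟩, y⟩ := x; rfl)
      · apply Sheaf.hom_ext; ext c x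
        first
        | rfl
        | (obtain ⟨⟨h⟩, y⟩ := x; rfl)
    · intro F F' a
      apply Over.OverMorphism.ext; apply Sheaf.hom_ext; ext c x
      exact sigma_ext ((F.hom.hom.app c x).down) _ _ _ rfl
  -- counit
  let ε : Ψ ⋙ Φ ≅ 𝟭 (Sheaf J' (Type 0)) := by
    refine NatIso.ofComponents (fun G => ?_) ?_
    · refine Iso.mk
        ⟨{ app := fun c => TypeCat.ofHom fun x => show G.val.obj c from x.2
           naturality := fun c c' f => rfl }⟩
        ⟨{ app := fun c => TypeCat.ofHom fun x => ⟨⟨c.unop.property⟩, x⟩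
           naturality := fun c c' f => rfl }⟩ ?_ ?_
      · apply Sheaf.hom_ext; ext c x
        first
        | rfl
        | (obtain ⟨⟨h⟩, y⟩ := x; rfl)
      · apply Sheaf.hom_ext; ext c x
        first
        | rfl
        | (obtain ⟨⟨h⟩, y⟩ := x; rfl)
    · intro G G' a
      apply Sheaf.hom_ext; ext c x; rfl
  exact ⟨CategoryTheory.Equivalence.mk Φ Ψ η ε⟩
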